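/- If ψ ∈ S(ℝⁿ) is nonzero and satisfies Aψ = λψ for some λ ∈ ℂ, then for every nonzero χ ∈ S(ℝᵏ) the function Ψ = T_{Ŝ,χ}ψ belongs to S(ℝ^{n+k}), is nonzero, and satisfies ÃΨ = λΨ; in particular every eigenvalue of A is an eigenvalue of Ã. -/
import Mathlib


open MeasureTheory Complex SchwartzMap
open scoped ComplexConjugate

/-- If `ψ ∈ S(ℝⁿ)` is a nonzero eigenfunction of `A` with eigenvalue `λ`,
then for every nonzero `χ ∈ S(ℝᵏ)` the function `Ψ = T_{Ŝ,χ}ψ = Ŝ⁻¹(ψ ⊗ χ)` belongs to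
`S(ℝ^{n+k})`, is nonzero, and satisfies `ÃΨ = λΨ`; in particular every eigenvalue of `A`
is an eigenvalue of `Ã`. -/
theorem stmt4 (n k : ℕ) (hn : 0 < n) (hk : 0 < k)
    -- `Ŝ` : a unitary operator mapping `S(ℝ^{n+k})` into itself, together with `Ŝ⁻¹`
    (Sh : 𝓢((Fin n → ℝ) × (Fin k → ℝ), ℂ) ≃L[ℂ] 𝓢((Fin n → ℝ) × (Fin k → ℝ), ℂ))
    -- unitarity of `Ŝ` (preservation of the `L²` inner product)
    (hSh : ∀ Φ Ψ : 𝓢((Fin n → ℝ) × (Fin k → ℝ), ℂ),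
      ∫ p, conj (Sh Φ p) * Sh Ψ p = ∫ p, conj (Φ p) * Ψ p)
    -- the tensor product `(ψ ⊗ χ)(x,y) = ψ(x)χ(y)` of Schwartz functions
    (tensor : 𝓢(Fin n → ℝ, ℂ) → 𝓢(Fin k → ℝ, ℂ) → 𝓢((Fin n → ℝ) × (Fin k → ℝ), ℂ))
    (htensor : ∀ ψ χ p, tensor ψ χ p = ψ p.1 * χ p.2)
    (A : 𝓢(Fin n → ℝ, ℂ) →L[ℂ] 𝓢(Fin n → ℝ, ℂ))
    (Atil : 𝓢((Fin n → ℝ) × (Fin k → ℝ), ℂ) →L[ℂ] 𝓢((Fin n → ℝ) × (Fin k → ℝ), ℂ))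
    -- the intertwining relation `Ã ∘ T_{Ŝ,χ} = T_{Ŝ,χ} ∘ A`, where `T_{Ŝ,χ}ψ = Ŝ⁻¹(ψ ⊗ χ)`
    (hint : ∀ (χ : 𝓢(Fin k → ℝ, ℂ)) (ψ : 𝓢(Fin n → ℝ, ℂ)),
      Atil (Sh.symm (tensor ψ χ)) = Sh.symm (tensor (A ψ) χ))
    (ψ : 𝓢(Fin n → ℝ, ℂ)) (hψ : ψ ≠ 0) (lam : ℂ) (heig : A ψ = lam • ψ)
    (χ : 𝓢(Fin k → ℝ, ℂ)) (hχ : χ ≠ 0) :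
    Sh.symm (tensor ψ χ) ≠ 0 ∧
      Atil (Sh.symm (tensor ψ χ)) = lam • Sh.symm (tensor ψ χ) := by
  have htens_ne : tensor ψ χ ≠ 0 := by
    obtain ⟨x, hx⟩ : ∃ x, ψ x ≠ 0 := by
      by_contra h
      push_neg at h
      exact hψ (SchwartzMap.ext fun x => by simp [h x])
    obtain ⟨y, hy⟩ : ∃ y, χ y ≠ 0 := by
      by_contra h
      push_neg at h
      exact hχ (SchwartzMap.ext fun y => by simp [h y])
    intro h0
    have := congrArg (fun f : 𝓢((Fin n → ℝ) × (Fin k → ℝ), ℂ) => f (x, y)) h0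
    simp [htensor] at this
    exact this.elim hx hy
  constructor
  · intro h0
    apply htens_ne
    have := congrArg Sh h0
    simpa using this
  · have hsm : tensor (A ψ) χ = lam • tensor ψ χ := by
      apply SchwartzMap.ext
      intro p
      simp [htensor, heig, SchwartzMap.smul_apply, mul_assoc]
    rw [hint, hsm, _root_.map_smul]
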